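/- For P₁, P₂ ∈ 𝒫 and A₁₂ ∈ p(n) with e^{A₁₂} = √(P₁⁻¹ P₂² P₁⁻¹), the curve φ(t) = √(P₁ e^{2tA₁₂} P₁) satisfies φ(0) = P₁ and φ(1) = P₂, and φ(t) ∈ 𝒫 for all t ∈ [0,1]. -/

import Mathlib

open Matrix

/-- The (total) symmetric positive-semidefinite square root of a matrix. -/
noncomputable def sqrtm {n : ℕ} (A : Matrix (Fin n) (Fin n) ℝ) : Matrix (Fin n) (Fin n) ℝ :=
  letI := Classical.dec A.PosSemidef
  if h : A.PosSemidef then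
    (h.1.eigenvectorUnitary.1 * diagonal ((↑) ∘ (√·) ∘ h.1.eigenvalues) *
      (star h.1.eigenvectorUnitary : Matrix (Fin n) (Fin n) ℝ)) else 0

open scoped MatrixOrder in
lemma sqrtm_eq_cfc_sqrt {n : ℕ} {M : Matrix (Fin n) (Fin n) ℝ} (hM : M.PosSemidef) :
    sqrtm M = CFC.sqrt M := by
  rw [sqrtm, dif_pos hM, CFC.sqrt_eq_cfc, cfc_nnreal_eq_real _ M hM.nonneg, hM.1.cfc_eq,
    IsHermitian.cfc, Unitary.conjStarAlgAut_apply]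
  congr 2
  congr 1
  funext i
  simp [max_eq_left (hM.eigenvalues_nonneg i)]

open scoped MatrixOrder in
lemma sqrtm_of_sq {n : ℕ} {B M : Matrix (Fin n) (Fin n) ℝ} (hB : B.PosSemidef)
    (hBM : B ^ 2 = M) : sqrtm M = B := by
  have hM : M.PosSemidef := hBM ▸ hB.pow 2
  rw [sqrtm_eq_cfc_sqrt hM]
  exact CFC.sqrt_unique (by rw [← hBM, sq]) hB.nonneg

open scoped MatrixOrder in
lemma sqrtm_sq {n : ℕ} {M : Matrix (Fin n) (Fin n) ℝ} (hM : M.PosSemidef) :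
    sqrtm M ^ 2 = M := by
  rw [sqrtm_eq_cfc_sqrt hM]; exact CFC.sq_sqrt M hM.nonneg

open scoped MatrixOrder in
lemma sqrtm_posSemidef {n : ℕ} {M : Matrix (Fin n) (Fin n) ℝ} (hM : M.PosSemidef) :
    (sqrtm M).PosSemidef := by
  rw [sqrtm_eq_cfc_sqrt hM]; exact (CFC.sqrt_nonneg M).posSemidef

lemma posDef_of_posSemidef_det_ne_zero {n : ℕ} {S : Matrix (Fin n) (Fin n) ℝ}
    (hS : S.PosSemidef) (hd : S.det ≠ 0) : S.PosDef := by
  exact hS.posDef_iff_det_ne_zero.mpr hd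

lemma det_exp_symm {n : ℕ} {A : Matrix (Fin n) (Fin n) ℝ} (hA : Aᵀ = A) :
    (NormedSpace.exp A).det = Real.exp A.trace := by
  have hH : A.IsHermitian := by
    rwa [IsHermitian, conjTranspose_eq_transpose_of_trivial]
  set U : Matrix (Fin n) (Fin n) ℝ := (hH.eigenvectorUnitary : Matrix (Fin n) (Fin n) ℝ) with hUdef
  have hmem := hH.eigenvectorUnitary.2
  have h1 : U * star U = 1 := (Matrix.mem_unitaryGroup_iff).mp hmem
  have hUnit : IsUnit U := by
    rw [Matrix.isUnit_iff_isUnit_det]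
    exact IsUnit.of_mul_eq_one (star U).det (by rw [← det_mul, h1, det_one])
  have hUinv : U⁻¹ = star U := inv_eq_right_inv h1
  set D : Matrix (Fin n) (Fin n) ℝ := diagonal (RCLike.ofReal ∘ hH.eigenvalues) with hDdef
  have hspec : A = U * D * U⁻¹ := by rw [hUinv]; exact hH.spectral_theorem
  have hexp : NormedSpace.exp A = U * NormedSpace.exp D * U⁻¹ := by
    rw [hspec]; exact Matrix.exp_conj U D hUnit
  have hdetD : (NormedSpace.exp D).det = Real.exp D.trace := by
    rw [hDdef, Matrix.exp_diagonal, det_diagonal, trace_diagonal]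
    simp only [Pi.exp_def, Function.comp_apply, RCLike.ofReal_real_eq_id, id_eq,
      ← Real.exp_eq_exp_ℝ]
    rw [← Real.exp_sum]
  have htr : A.trace = D.trace := by
    rw [hspec, trace_mul_cycle, Matrix.nonsing_inv_mul _ (hUnit.map detMonoidHom), one_mul]
  rw [hexp, Matrix.det_conj hUnit, hdetD, htr]

lemma exp_posSemidef {n : ℕ} {B : Matrix (Fin n) (Fin n) ℝ} (hB : Bᵀ = B) :
    (NormedSpace.exp B).PosSemidef := by
  have hhalf : B = (1/2 : ℝ) • B + (1/2 : ℝ) • B := by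
    rw [← add_smul]; norm_num
  have hC : (NormedSpace.exp ((1/2 : ℝ) • B))ᴴ = NormedSpace.exp ((1/2 : ℝ) • B) := by
    rw [conjTranspose_eq_transpose_of_trivial, ← Matrix.exp_transpose, transpose_smul, hB]
  have : NormedSpace.exp B =
      (NormedSpace.exp ((1/2 : ℝ) • B))ᴴ * NormedSpace.exp ((1/2 : ℝ) • B) := by
    rw [hC]
    conv_lhs => rw [hhalf]
    exact Matrix.exp_add_of_commute _ _ (Commute.refl _)
  rw [this]
  exact posSemidef_conjTranspose_mul_self _

/-- For `P₁, P₂ ∈ 𝒫` and `A₁₂ ∈ p(n)` with `e^{A₁₂} = √(P₁⁻¹ P₂² P₁⁻¹)`, the curve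
`φ(t) = √(P₁ e^{2 t A₁₂} P₁)` satisfies `φ(0) = P₁`, `φ(1) = P₂`, and `φ(t) ∈ 𝒫` for
all `t ∈ [0, 1]`. -/
theorem geodesic_on_P (n : ℕ) (P₁ P₂ A₁₂ : Matrix (Fin n) (Fin n) ℝ)
    (h₁ : P₁.PosDef) (h₁d : P₁.det = 1) (h₂ : P₂.PosDef) (h₂d : P₂.det = 1)
    (hA : A₁₂ᵀ = A₁₂) (hAtr : A₁₂.trace = 0)
    (hAexp : NormedSpace.exp A₁₂ = sqrtm (P₁⁻¹ * P₂ ^ 2 * P₁⁻¹)) :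
    (sqrtm (P₁ * NormedSpace.exp ((2 * (0:ℝ)) • A₁₂) * P₁) = P₁) ∧
    (sqrtm (P₁ * NormedSpace.exp ((2 * (1:ℝ)) • A₁₂) * P₁) = P₂) ∧
    (∀ t ∈ Set.Icc (0:ℝ) 1,
      (sqrtm (P₁ * NormedSpace.exp ((2 * t) • A₁₂) * P₁)).PosDef ∧
      (sqrtm (P₁ * NormedSpace.exp ((2 * t) • A₁₂) * P₁)).det = 1) := by
  have hP₁H : P₁ᴴ = P₁ := h₁.1
  have hP₁unit : IsUnit P₁.det := by rw [h₁d]; exact isUnit_one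
  refine ⟨?_, ?_, ?_⟩
  · -- φ(0) = P₁
    have h0 : ((2 * (0:ℝ)) • A₁₂) = 0 := by simp
    rw [h0, NormedSpace.exp_zero, mul_one, ← sq]
    exact sqrtm_of_sq h₁.posSemidef rfl
  · -- φ(1) = P₂
    have hN : (P₁⁻¹ * P₂ ^ 2 * P₁⁻¹).PosSemidef := by
      have h := posSemidef_conjTranspose_mul_self (P₂ * P₁⁻¹)
      have he : (P₂ * P₁⁻¹)ᴴ * (P₂ * P₁⁻¹) = P₁⁻¹ * P₂ ^ 2 * P₁⁻¹ := by
        rw [conjTranspose_mul, conjTranspose_nonsing_inv, hP₁H, h₂.1]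
        rw [pow_two]; noncomm_ring
      rwa [he] at h
    have h1 : ((2 * (1:ℝ)) • A₁₂) = A₁₂ + A₁₂ := by
      rw [mul_one, two_smul]
    have hexp2 : NormedSpace.exp ((2 * (1:ℝ)) • A₁₂) = P₁⁻¹ * P₂ ^ 2 * P₁⁻¹ := by
      rw [h1, Matrix.exp_add_of_commute _ _ (Commute.refl _), hAexp, ← pow_two]
      exact sqrtm_sq hN
    have hM : P₁ * NormedSpace.exp ((2 * (1:ℝ)) • A₁₂) * P₁ = P₂ ^ 2 := by
      rw [hexp2]
      rw [show P₁ * (P₁⁻¹ * P₂ ^ 2 * P₁⁻¹) * P₁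
          = (P₁ * P₁⁻¹) * P₂ ^ 2 * (P₁⁻¹ * P₁) by noncomm_ring]
      rw [Matrix.mul_nonsing_inv _ hP₁unit, Matrix.nonsing_inv_mul _ hP₁unit, one_mul, mul_one]
    rw [hM]
    exact sqrtm_of_sq h₂.posSemidef rfl
  · -- general t
    intro t _
    have hBsymm : ((2 * t) • A₁₂)ᵀ = (2 * t) • A₁₂ := by rw [transpose_smul, hA]
    have hBtr : ((2 * t) • A₁₂).trace = 0 := by rw [trace_smul, hAtr, smul_zero]
    set E := NormedSpace.exp ((2 * t) • A₁₂) with hE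
    have hEdet : E.det = 1 := by rw [hE, det_exp_symm hBsymm, hBtr, Real.exp_zero]
    have hEsd : E.PosSemidef := exp_posSemidef hBsymm
    have hM : (P₁ * E * P₁).PosSemidef := by
      have := hEsd.mul_mul_conjTranspose_same P₁
      rwa [hP₁H] at this
    have hMdet : (P₁ * E * P₁).det = 1 := by
      rw [det_mul, det_mul, h₁d, hEdet]; ring
    have hSsq : sqrtm (P₁ * E * P₁) ^ 2 = P₁ * E * P₁ := sqrtm_sq hM
    have hSdet2 : (sqrtm (P₁ * E * P₁)).det ^ 2 = 1 := by
      rw [← det_pow, hSsq, hMdet]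
    have hSne : (sqrtm (P₁ * E * P₁)).det ≠ 0 := by
      intro h; rw [h] at hSdet2; norm_num at hSdet2
    have hSpos : (sqrtm (P₁ * E * P₁)).PosDef :=
      posDef_of_posSemidef_det_ne_zero (sqrtm_posSemidef hM) hSne
    refine ⟨hSpos, ?_⟩
    nlinarith [hSpos.det_pos]
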